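/- Let $p(x) = (x^2-1)^n$ and fix $\ell \ge 1$. Then for each root $y^*$ of the physicists' Hermite polynomial $H_\ell$, there exists for all sufficiently large $n$ a root $x_n$ of $p^{(\ell)}$ with $\sqrt{n}\, x_n \to y^*$ as $n \to \infty$. -/

import Mathlib

open Polynomial Filter

namespace RDPaux

/-- Two-variable recursion: outer variable `X` is the space variable `y`,
inner variable (coefficients in `ℝ[ε]`) is `ε = 1/n`. -/
noncomputable def W : ℕ → Polynomial (Polynomial ℝ)
  | 0 => 1
  | k + 1 => (C Polynomial.X * X ^ 2 - 1) * derivative (W k)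
      + C (2 - 2 * (k : Polynomial ℝ) * Polynomial.X) * X * W k

noncomputable def V (e : ℝ) (k : ℕ) : Polynomial ℝ := (W k).map (evalRingHom e)

lemma V_zero (e : ℝ) : V e 0 = 1 := by simp [V, W]

lemma V_succ (e : ℝ) (k : ℕ) :
    V e (k + 1) = (C e * X ^ 2 - 1) * derivative (V e k)
      + C (2 - 2 * (k : ℝ) * e) * X * V e k := by
  simp only [V, W, Polynomial.map_add, Polynomial.map_mul, Polynomial.map_sub,
    Polynomial.map_one, Polynomial.map_pow, map_C, map_X, derivative_map]
  simp [evalRingHom]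

/-- physicists' Hermite polynomials. -/
noncomputable def Hp (k : ℕ) : Polynomial ℝ := V 0 k

lemma Hp_zero : Hp 0 = 1 := V_zero 0

lemma Hp_succ (k : ℕ) : Hp (k + 1) = 2 * X * Hp k - derivative (Hp k) := by
  rw [Hp, V_succ]
  simp only [map_ofNat, Nat.cast_ofNat, C_0, mul_zero, zero_mul, sub_zero, C_eq_natCast,
    Nat.cast_zero, zero_mul, mul_zero]
  rw [Hp]
  ring

lemma continuous_evalV (k : ℕ) (y : ℝ) : Continuous fun e : ℝ => eval y (V e k) := by
  have h : (fun e : ℝ => eval y (V e k))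
      = fun e : ℝ => ∑ i ∈ Finset.range ((W k).natDegree + 1),
          eval e ((W k).coeff i) * y ^ i := by
    funext e
    rw [V, eval_map, eval₂_eq_sum_range]
    rfl
  rw [h]
  exact continuous_finset_sum _ fun i _ =>
    (Polynomial.continuous _).mul continuous_const

lemma derivative_Hp : ∀ k : ℕ, derivative (Hp (k + 1)) = ((2 * (k + 1) : ℕ) : Polynomial ℝ) * Hp k := by
  intro k
  induction k with
  | zero =>
    rw [Hp_succ, Hp_zero]
    simp
  | succ k ih =>
    rw [Hp_succ (k+1), derivative_sub, ih]
    simp only [derivative_mul, derivative_natCast, derivative_ofNat, derivative_X, ih]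
    push_cast
    linear_combination (-(2*((k:Polynomial ℝ)+1))) * (Hp_succ k)

lemma no_common_root : ∀ (k : ℕ) (y : ℝ), eval y (Hp (k + 1)) = 0 → eval y (Hp k) = 0 → False := by
  intro k
  induction k with
  | zero => intro y _ h0; rw [Hp_zero] at h0; simp at h0
  | succ k ih =>
    intro y h2 h1
    have hk : eval y (Hp k) = 0 := by
      have h := Hp_succ (k + 1)
      rw [h, derivative_Hp k] at h2
      simp only [eval_sub, eval_mul, eval_ofNat, eval_X, eval_natCast] at h2
      rw [h1] at h2
      push_cast at h2
      have h2' : (2 * ((k:ℝ) + 1)) * eval y (Hp k) = 0 := by linarith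
      have hne : (2 * ((k:ℝ) + 1)) ≠ 0 := by positivity
      exact (mul_eq_zero.mp h2').resolve_left hne
    exact ih y h1 hk

lemma gauss_deriv : ∀ k : ℕ, iteratedDeriv k (fun t : ℝ => Real.exp (-t ^ 2))
    = fun y : ℝ => (-1 : ℝ) ^ k * eval y (Hp k) * Real.exp (-y ^ 2) := by
  intro k
  induction k with
  | zero => funext y; simp [Hp_zero]
  | succ k ih =>
    rw [iteratedDeriv_succ, ih]
    funext y
    have h1 : HasDerivAt (fun y : ℝ => eval y (Hp k)) (eval y (derivative (Hp k))) y :=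
      Polynomial.hasDerivAt _ y
    have h2 : HasDerivAt (fun y : ℝ => Real.exp (-y ^ 2)) (Real.exp (-y ^ 2) * (-(2 * y))) y := by
      have := ((hasDerivAt_pow 2 y).neg).exp
      simpa using this
    have h3 : HasDerivAt (fun y : ℝ => (-1 : ℝ) ^ k * (eval y (Hp k) * Real.exp (-y ^ 2)))
        ((-1 : ℝ) ^ k * (eval y (derivative (Hp k)) * Real.exp (-y ^ 2)
          + eval y (Hp k) * (Real.exp (-y ^ 2) * -(2 * y)))) y :=
      ((h1.mul h2).const_mul ((-1 : ℝ) ^ k))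
    rw [show (fun y : ℝ => (-1 : ℝ) ^ k * eval y (Hp k) * Real.exp (-y ^ 2))
        = fun y : ℝ => (-1 : ℝ) ^ k * (eval y (Hp k) * Real.exp (-y ^ 2)) by
      funext z; ring]
    rw [h3.deriv]
    rw [Hp_succ k]
    simp only [eval_sub, eval_mul, eval_ofNat, eval_X]
    ring

lemma physHermite_eq (ℓ : ℕ) (y : ℝ) :
    (-1 : ℝ) ^ ℓ * Real.exp (y ^ 2) * iteratedDeriv ℓ (fun t : ℝ => Real.exp (-t ^ 2)) y
      = eval y (Hp ℓ) := by
  have h : Real.exp (y ^ 2) * Real.exp (-y ^ 2) = 1 := by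
    rw [← Real.exp_add]; simp
  have h2 : ((-1 : ℝ) ^ ℓ) * ((-1 : ℝ) ^ ℓ) = 1 := by
    rw [← pow_add]; exact Even.neg_one_pow ⟨ℓ, rfl⟩
  have h3 : (-1 : ℝ) ^ ℓ * Real.exp (y ^ 2) * ((-1 : ℝ) ^ ℓ * eval y (Hp ℓ) * Real.exp (-y ^ 2))
      = ((-1 : ℝ) ^ ℓ * (-1 : ℝ) ^ ℓ) * (Real.exp (y ^ 2) * Real.exp (-y ^ 2)) * eval y (Hp ℓ) := by
    ring
  rw [gauss_deriv]
  simp only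
  rw [h3, h2, h, one_mul, one_mul]

lemma key (n : ℕ) (hn : 1 ≤ n) : ∀ k : ℕ, k ≤ n →
    (derivative)^[k] ((X ^ 2 - 1 : Polynomial ℝ) ^ n)
      = C ((Real.sqrt n) ^ k) * ((V (1 / n) k).comp (C (Real.sqrt n) * X))
          * (X ^ 2 - 1) ^ (n - k) := by
  have hs2 : (Real.sqrt n) ^ 2 = (n : ℝ) := Real.sq_sqrt (Nat.cast_nonneg n)
  have hn0 : (n : ℝ) ≠ 0 := Nat.cast_ne_zero.mpr (by omega)
  have hs0 : Real.sqrt n ≠ 0 := by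
    intro h; rw [h] at hs2; exact hn0 ((zero_pow (two_ne_zero)).symm.trans hs2).symm
  intro k
  induction k with
  | zero => intro _; simp [V_zero]
  | succ k ih =>
    intro hk1
    have hk : k ≤ n := by omega
    rw [Function.iterate_succ_apply', ih hk]
    have hM : n - k = (n - (k + 1)) + 1 := by omega
    rw [hM, V_succ]
    apply Polynomial.funext
    intro x
    have hcast : (((n - (k + 1)) + 1 : ℕ) : ℝ) = (n : ℝ) - (k : ℝ) := by
      push_cast [Nat.cast_sub hk1]
      ring
    simp only [derivative_mul, derivative_pow, derivative_comp, derivative_C, derivative_X,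
      derivative_sub, derivative_one, derivative_X_pow, eval_add, eval_mul, eval_sub, eval_pow,
      eval_comp, eval_C, eval_X, eval_one, zero_mul, mul_zero, zero_add, add_zero, eval_zero,
      eval_natCast, Nat.cast_ofNat, Nat.add_sub_cancel, pow_one, eval_ofNat]
    rw [hcast]
    set s := Real.sqrt n with hs
    rw [← hs2]
    field_simp
    ring

lemma key_eval (n ℓ : ℕ) (hn : 1 ≤ n) (hl : ℓ ≤ n) (y : ℝ) :
    eval (y / Real.sqrt n) ((derivative)^[ℓ] ((X ^ 2 - 1 : Polynomial ℝ) ^ n))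
      = (Real.sqrt n) ^ ℓ * eval y (V (1 / n) ℓ)
          * ((y / Real.sqrt n) ^ 2 - 1) ^ (n - ℓ) := by
  have hnpos : (0:ℝ) < n := by exact_mod_cast Nat.pos_of_ne_zero (by omega)
  have hs0 : Real.sqrt n ≠ 0 := ne_of_gt (Real.sqrt_pos.mpr hnpos)
  rw [key n hn ℓ hl]
  simp only [eval_mul, eval_C, eval_pow, eval_sub, eval_one, eval_comp, eval_X]
  have hy : Real.sqrt n * (y / Real.sqrt n) = y := by field_simp
  rw [hy]

lemma sign_change {f : ℝ → ℝ} {z c : ℝ} (hf : HasDerivAt f c z) (h0 : f z = 0)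
    (hc : c ≠ 0) {ε : ℝ} (hε : 0 < ε) :
    ∃ a b : ℝ, z - ε < a ∧ a < z ∧ z < b ∧ b < z + ε ∧ f a * f b < 0 := by
  have hs := hasDerivAt_iff_tendsto_slope.mp hf
  have hplus : Tendsto (fun t : ℝ => z + t) (nhdsWithin 0 (Set.Ioi 0)) (nhdsWithin z {z}ᶜ) := by
    rw [tendsto_nhdsWithin_iff]
    constructor
    · have hcont : Tendsto (fun t : ℝ => z + t) (nhds 0) (nhds z) := by
        simpa using (continuous_add_left z).tendsto (0:ℝ)
      exact hcont.mono_left nhdsWithin_le_nhds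
    · filter_upwards [eventually_mem_nhdsWithin] with t ht
      simp only [Set.mem_Ioi] at ht
      simp only [Set.mem_compl_iff, Set.mem_singleton_iff]
      intro h; nlinarith
  have hminus : Tendsto (fun t : ℝ => z - t) (nhdsWithin 0 (Set.Ioi 0)) (nhdsWithin z {z}ᶜ) := by
    rw [tendsto_nhdsWithin_iff]
    constructor
    · have hcont : Tendsto (fun t : ℝ => z - t) (nhds 0) (nhds z) := by
        simpa using (continuous_sub_left z).tendsto (0:ℝ)
      exact hcont.mono_left nhdsWithin_le_nhds
    · filter_upwards [eventually_mem_nhdsWithin] with t ht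
      simp only [Set.mem_Ioi] at ht
      simp only [Set.mem_compl_iff, Set.mem_singleton_iff]
      intro h; nlinarith
  have h1 : Tendsto (fun t : ℝ => slope f z (z + t) * slope f z (z - t))
      (nhdsWithin 0 (Set.Ioi 0)) (nhds (c * c)) :=
    (hs.comp hplus).mul (hs.comp hminus)
  have hcc : 0 < c * c := mul_self_pos.mpr hc
  have h2 : ∀ᶠ t in nhdsWithin (0:ℝ) (Set.Ioi 0),
      slope f z (z + t) * slope f z (z - t) > 0 :=
    h1.eventually (eventually_gt_nhds hcc)
  have h3 : ∀ᶠ t in nhdsWithin (0:ℝ) (Set.Ioi 0), t < ε :=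
    eventually_nhdsWithin_of_eventually_nhds (eventually_lt_nhds hε)
  have h4 := (h2.and (h3.and eventually_mem_nhdsWithin)).exists
  obtain ⟨t, hprod, htε, ht0⟩ := h4
  simp only [Set.mem_Ioi] at ht0
  refine ⟨z - t, z + t, by linarith, by linarith, by linarith, by linarith, ?_⟩
  have hslope1 : slope f z (z + t) = f (z + t) / t := by
    rw [slope_def_field, h0]; ring_nf
  have hslope2 : slope f z (z - t) = f (z - t) / (-t) := by
    rw [slope_def_field, h0]; ring_nf
  rw [hslope1, hslope2] at hprod
  have ht2 : (0:ℝ) < t * t := mul_pos ht0 ht0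
  have heq : f (z + t) / t * (f (z - t) / (-t)) = -(f (z + t) * f (z - t)) / (t * t) := by
    field_simp
  rw [heq] at hprod
  have h5 : -(f (z + t) * f (z - t)) > 0 := by
    by_contra h
    push_neg at h
    have := div_nonpos_of_nonpos_of_nonneg h (le_of_lt ht2)
    linarith
  nlinarith [h5]

lemma main_ev (ℓ : ℕ) (hℓ : 1 ≤ ℓ) (ystar : ℝ) (hroot : eval ystar (Hp ℓ) = 0)
    {ε : ℝ} (hε : 0 < ε) :
    ∀ᶠ n : ℕ in atTop, ∃ r : ℝ,
      ((derivative)^[ℓ] ((X ^ 2 - 1 : Polynomial ℝ) ^ n)) ≠ 0 ∧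
      IsRoot ((derivative)^[ℓ] ((X ^ 2 - 1 : Polynomial ℝ) ^ n)) r ∧
      |Real.sqrt n * r - ystar| < ε := by
  obtain ⟨m, rfl⟩ : ∃ m, ℓ = m + 1 := ⟨ℓ - 1, by omega⟩
  have hd : eval ystar (derivative (Hp (m+1))) ≠ 0 := by
    rw [derivative_Hp m]
    simp only [eval_mul, eval_natCast]
    intro h
    rcases mul_eq_zero.mp h with h' | h'
    · have hpos : (0:ℝ) < ((2*(m+1):ℕ):ℝ) := by
        exact_mod_cast Nat.pos_of_ne_zero (by omega)
      exact ne_of_gt hpos h'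
    · exact no_common_root m ystar hroot h'
  obtain ⟨a, b, ha1, ha2, hb1, hb2, hab⟩ :=
    sign_change (Polynomial.hasDerivAt (Hp (m+1)) ystar) hroot hd hε
  have h1n : Tendsto (fun n : ℕ => (1:ℝ)/n) atTop (nhds 0) := tendsto_one_div_atTop_nhds_zero_nat
  have hV : Tendsto (fun n : ℕ => eval a (V (1/(n:ℝ)) (m+1)) * eval b (V (1/(n:ℝ)) (m+1)))
      atTop (nhds (eval a (Hp (m+1)) * eval b (Hp (m+1)))) := by
    have := (((continuous_evalV (m+1) a).tendsto 0).comp h1n).mul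
      (((continuous_evalV (m+1) b).tendsto 0).comp h1n)
    simpa [Hp, Function.comp_def] using this
  have hev : ∀ᶠ n : ℕ in atTop,
      eval a (V (1/(n:ℝ)) (m+1)) * eval b (V (1/(n:ℝ)) (m+1)) < 0 :=
    hV.eventually (eventually_lt_nhds hab)
  have hna : ∀ᶠ n : ℕ in atTop, (a^2 : ℝ) < n :=
    (tendsto_natCast_atTop_atTop (R := ℝ)).eventually_gt_atTop (a^2)
  have hnb : ∀ᶠ n : ℕ in atTop, (b^2 : ℝ) < n :=
    (tendsto_natCast_atTop_atTop (R := ℝ)).eventually_gt_atTop (b^2)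
  filter_upwards [hev, hna, hnb, eventually_ge_atTop (m+1)] with n hVn han hbn hln
  have hn1 : 1 ≤ n := by omega
  have hnpos : (0:ℝ) < n := by exact_mod_cast Nat.pos_of_ne_zero (by omega)
  have hs2 : (Real.sqrt n) ^ 2 = (n : ℝ) := Real.sq_sqrt (Nat.cast_nonneg n)
  have hspos : (0:ℝ) < Real.sqrt n := Real.sqrt_pos.mpr hnpos
  set s := Real.sqrt n with hsdef
  set p := ((derivative)^[m+1] ((X ^ 2 - 1 : Polynomial ℝ) ^ n)) with hpdef
  have hkeya := key_eval n (m+1) hn1 hln a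
  have hkeyb := key_eval n (m+1) hn1 hln b
  have hbasea : (a/s)^2 - 1 < 0 := by
    have : (a/s)^2 = a^2/(n:ℝ) := by rw [div_pow, hs2]
    rw [this]
    have := (div_lt_one hnpos).mpr han
    linarith
  have hbaseb : (b/s)^2 - 1 < 0 := by
    have : (b/s)^2 = b^2/(n:ℝ) := by rw [div_pow, hs2]
    rw [this]
    have := (div_lt_one hnpos).mpr hbn
    linarith
  have hprod : eval (a/s) p * eval (b/s) p
      = (s^(m+1) * s^(m+1) * (((a/s)^2 - 1) * ((b/s)^2 - 1))^(n-(m+1)))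
        * (eval a (V (1/(n:ℝ)) (m+1)) * eval b (V (1/(n:ℝ)) (m+1))) := by
    rw [hpdef, hkeya, hkeyb, mul_pow]
    ring
  have hposfac : 0 < s^(m+1) * s^(m+1) * (((a/s)^2 - 1) * ((b/s)^2 - 1))^(n-(m+1)) :=
    mul_pos (mul_pos (pow_pos hspos _) (pow_pos hspos _))
      (pow_pos (mul_pos_of_neg_of_neg hbasea hbaseb) _)
  have hP : eval (a/s) p * eval (b/s) p < 0 := by
    rw [hprod]
    exact mul_neg_of_pos_of_neg hposfac hVn
  have hpne : p ≠ 0 := by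
    intro h0
    rw [h0] at hP
    simp at hP
  have habs : a < b := by linarith
  have hdiv : a/s < b/s := by
    exact div_lt_div_of_pos_right habs hspos
  have hcont : ContinuousOn (fun x : ℝ => eval x p) (Set.Icc (a/s) (b/s)) :=
    (Polynomial.continuous p).continuousOn
  have hroot' : ∃ r ∈ Set.Ioo (a/s) (b/s), eval r p = 0 := by
    rcases mul_neg_iff.mp hP with ⟨hP1, hP2⟩ | ⟨hP1, hP2⟩
    · have h0 : (0:ℝ) ∈ Set.Ioo (eval (b/s) p) (eval (a/s) p) := ⟨hP2, hP1⟩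
      obtain ⟨r, hr, hr0⟩ := intermediate_value_Ioo' (le_of_lt hdiv) hcont h0
      exact ⟨r, hr, hr0⟩
    · have h0 : (0:ℝ) ∈ Set.Ioo (eval (a/s) p) (eval (b/s) p) := ⟨hP1, hP2⟩
      obtain ⟨r, hr, hr0⟩ := intermediate_value_Ioo (le_of_lt hdiv) hcont h0
      exact ⟨r, hr, hr0⟩
  obtain ⟨r, ⟨hr1, hr2⟩, hr0⟩ := hroot'
  refine ⟨r, hpne, hr0, ?_⟩
  have hra : a < s * r := by
    have := (div_lt_iff₀ hspos).mp hr1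
    linarith [this]
  have hrb : s * r < b := by
    have := (lt_div_iff₀ hspos).mp hr2
    linarith [this]
  rw [abs_lt]
  constructor <;> linarith

end RDPaux

/-- The `ℓ`-th physicists' Hermite polynomial, defined by the Rodrigues formula
`H_ℓ(y) = (-1)^ℓ e^{y²} (d/dy)^ℓ e^{-y²}`. -/
noncomputable def physHermite (ℓ : ℕ) (y : ℝ) : ℝ :=
  (-1 : ℝ) ^ ℓ * Real.exp (y ^ 2) * iteratedDeriv ℓ (fun t : ℝ => Real.exp (-t ^ 2)) y

/-- For each root `y*` of `H_ℓ`, for all sufficiently large `n` the `ℓ`-th derivative of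
`(x² - 1)ⁿ` has a root `xₙ` with `√n · xₙ → y*`. -/
theorem roots_of_derivs_of_pow_converge (ℓ : ℕ) (hℓ : 1 ≤ ℓ) (ystar : ℝ)
    (hroot : physHermite ℓ ystar = 0) :
    ∃ (N : ℕ) (x : ℕ → ℝ),
      (∀ n : ℕ, N ≤ n →
        Polynomial.eval (x n)
          ((Polynomial.derivative)^[ℓ] ((Polynomial.X ^ 2 - 1 : Polynomial ℝ) ^ n)) = 0) ∧
      Tendsto (fun n : ℕ => Real.sqrt n * x n) atTop (nhds ystar) := by
  classical
  have hroot' : eval ystar (RDPaux.Hp ℓ) = 0 := by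
    rw [← RDPaux.physHermite_eq ℓ ystar]
    exact hroot
  set P : ℕ → Polynomial ℝ :=
    fun n => (Polynomial.derivative)^[ℓ] ((Polynomial.X ^ 2 - 1 : Polynomial ℝ) ^ n) with hP
  set R : ℕ → Finset ℝ := fun n => (P n).roots.toFinset with hR
  set F : ℕ → ℝ → ℝ := fun n r => |Real.sqrt n * r - ystar| with hF
  set x : ℕ → ℝ := fun n =>
    if h : (R n).Nonempty then (Finset.exists_min_image (R n) (F n) h).choose else 0 with hx
  have hxmem : ∀ n : ℕ, ∀ h : (R n).Nonempty,
      x n ∈ R n ∧ ∀ r ∈ R n, F n (x n) ≤ F n r := by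
    intro n h
    have hspec := (Finset.exists_min_image (R n) (F n) h).choose_spec
    have : x n = (Finset.exists_min_image (R n) (F n) h).choose := by
      rw [hx]; simp [dif_pos h]
    rw [this]
    exact ⟨hspec.1, hspec.2⟩
  have hmem_of : ∀ n : ℕ, ∀ r : ℝ, P n ≠ 0 → (P n).IsRoot r → r ∈ R n := by
    intro n r hne hr
    exact Multiset.mem_toFinset.mpr (mem_roots'.mpr ⟨hne, hr⟩)
  obtain ⟨N, hN⟩ := eventually_atTop.mp (RDPaux.main_ev ℓ hℓ ystar hroot' one_pos)
  refine ⟨N, x, ?_, ?_⟩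
  · intro n hn
    obtain ⟨r, hne, hr, _⟩ := hN n hn
    have hrR : r ∈ R n := hmem_of n r hne hr
    have hnonempty : (R n).Nonempty := ⟨r, hrR⟩
    have hxR := (hxmem n hnonempty).1
    have := Multiset.mem_toFinset.mp hxR
    exact (mem_roots'.mp this).2
  · rw [Metric.tendsto_atTop]
    intro ε hε
    obtain ⟨M, hM⟩ := eventually_atTop.mp (RDPaux.main_ev ℓ hℓ ystar hroot' hε)
    refine ⟨M, fun n hn => ?_⟩
    obtain ⟨r, hne, hr, hclose⟩ := hM n hn
    have hrR : r ∈ R n := hmem_of n r hne hr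
    have hnonempty : (R n).Nonempty := ⟨r, hrR⟩
    have hmin := (hxmem n hnonempty).2 r hrR
    rw [Real.dist_eq]
    calc |Real.sqrt n * x n - ystar| = F n (x n) := rfl
      _ ≤ F n r := hmin
      _ < ε := hclose
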